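/- If (H, W, b) with H ∈ ℝ^{p×CN}, W ∈ ℝ^{C×p}, b ∈ ℝ^C exhibits strong neural collapse, then the empirical risk vanishes: R_e(H, W, b) = 0. -/

import Mathlib

open Matrix

/-- If `(H, W, b)` exhibits strong neural collapse
(SNC1: `W Wᵀ = √N (I_C - (1/C) 1 1ᵀ)`, SNC2: `H = (1/√N)(W ⊗ 1_N)ᵀ`,
SNC3: `b = (1/C) 1_C`), then the empirical risk
`R_e(H,W,b) = (1/2)‖W H + b 1ᵀ - I_C ⊗ 1_Nᵀ‖_F²` vanishes.
The `CN` columns are indexed by `Fin C × Fin N`, so that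
`I_C ⊗ 1_Nᵀ` has `(c, (c', n))` entry `if c' = c then 1 else 0` and
`(W ⊗ 1_N)ᵀ` has `(j, (c, n))` entry `W c j`. -/
theorem empirical_risk_eq_zero_of_snc (C N p : ℕ) (hC : 0 < C) (hN : 0 < N) (hp : 0 < p)
    (H : Matrix (Fin p) (Fin C × Fin N) ℝ)
    (W : Matrix (Fin C) (Fin p) ℝ) (b : Fin C → ℝ)
    (snc1 : W * Wᵀ = Real.sqrt N •
      ((1 : Matrix (Fin C) (Fin C) ℝ) - (C : ℝ)⁻¹ • Matrix.of (fun _ _ => (1 : ℝ))))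
    (snc2 : H = Matrix.of (fun j (cn : Fin C × Fin N) => (Real.sqrt N)⁻¹ * W cn.1 j))
    (snc3 : b = fun _ => (C : ℝ)⁻¹) :
    (1 / 2 : ℝ) * ∑ c : Fin C, ∑ cn : Fin C × Fin N,
      ((W * H) c cn + b c - if cn.1 = c then 1 else 0) ^ 2 = 0 := by
  have hs : Real.sqrt N ≠ 0 := by
    positivity
  have key : ∀ c : Fin C, ∀ cn : Fin C × Fin N,
      (W * H) c cn + b c - (if cn.1 = c then 1 else 0) = 0 := by
    intro c cn
    have hWH : (W * H) c cn = (Real.sqrt N)⁻¹ * (W * Wᵀ) c cn.1 := by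
      simp only [Matrix.mul_apply, snc2, Matrix.of_apply, Matrix.transpose_apply,
        Finset.mul_sum]
      apply Finset.sum_congr rfl
      intro j _
      ring
    rw [hWH, snc1, snc3]
    simp only [Matrix.smul_apply, Matrix.sub_apply, Matrix.one_apply, Matrix.smul_apply,
      Matrix.of_apply, smul_eq_mul]
    by_cases h : cn.1 = c
    · simp [h]; field_simp; ring
    · simp [h, Ne.symm h]; field_simp; ring
  have : ∀ c : Fin C, ∑ cn : Fin C × Fin N,
      ((W * H) c cn + b c - if cn.1 = c then 1 else 0) ^ 2 = 0 := by
    intro c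
    apply Finset.sum_eq_zero
    intro cn _
    rw [key c cn]
    ring
  simp [this]
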